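/- Let p be an odd prime, G' the maximal subgroup of G of order prime to p, and χ : G' → \bar{ℚ}_p^× an injective (faithful) character; let O_χ = ℤ_p[χ(G')], regarded as a ℤ_p[G']-algebra via χ, and set ℤ_p[G]^χ = ℤ_p[G] ⊗_{ℤ_p[G']} O_χ; for x ∈ ℤ_p[G] write x^χ for its image in ℤ_p[G]^χ. Assume D is not a p-group. Then in ℤ_p[G]^χ, the ideal generated by (#I·ν_I)^χ together with the elements ((#I − ν_I·φ̃^{-1})·j)^χ for j ∈ 𝓙 equals the principal ideal generated by (#I − ν_I·φ̃^{-1})^χ. (This is Lemma 5.1 of the paper, 𝓐^χ = 𝓑^χ for 𝓐 = h·SFitt¹_{ℤ_p[G]}(A⊗ℤ_p) and 𝓑 = (1 − (ν_I/#I)φ^{-1}), with 𝓐 expressed via Theorem 1.3 and denominators cleared by multiplying by #I.) -/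

import Mathlib

open MonoidAlgebra Finset

/-- The sum `ν_H = Σ_{σ ∈ H} σ` of the elements of a subgroup `H` in the group algebra. -/
noncomputable def nuElt (R : Type) [CommRing R] {G : Type} [CommGroup G] [Fintype G]
    (H : Subgroup G) : MonoidAlgebra R G :=
  letI := Classical.decPred (· ∈ H)
  ∑ σ ∈ Finset.univ.filter (· ∈ H), MonoidAlgebra.of R G σ

/-- `I = I_1 × ⋯ × I_s` where `I_l` is the cyclic subgroup generated by `σ l`:
every element of `I` is, in a unique way, the product of elements of the subgroups
`⟨σ l⟩`. -/
def IsDecomp {G : Type} [CommGroup G] (I : Subgroup G) {s : ℕ} (σ : Fin s → G) : Prop :=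
  (∀ l, σ l ∈ I) ∧
    ∀ g ∈ I, ∃! x : ∀ l, Subgroup.zpowers (σ l), (∏ l, ((x l : G))) = g

/-- The ideal `Z_i ⊆ R[G]` generated by the products `ν_{l_1} ⋯ ν_{l_{s-i}}` over all
`(s-i)`-element subsets `{l_1 < ⋯ < l_{s-i}}` of `{1, …, s}`. -/
noncomputable def ZidealR (R : Type) [CommRing R] {G : Type} [CommGroup G] [Fintype G]
    {s : ℕ} (σ : Fin s → G) (i : ℕ) : Ideal (MonoidAlgebra R G) :=
  Ideal.span {x | ∃ T : Finset (Fin s), T.card = s - i ∧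
    x = ∏ l ∈ T, nuElt R (Subgroup.zpowers (σ l))}

/-- The ideal `𝓘_H = ker(R[G] → R[G/H])`. -/
noncomputable def kerIdealR (R : Type) [CommRing R] {G : Type} [CommGroup G] [Fintype G]
    (H : Subgroup G) : Ideal (MonoidAlgebra R G) :=
  RingHom.ker (MonoidAlgebra.mapDomainRingHom R (QuotientGroup.mk' H))

open scoped TensorProduct

-- Auxiliary lemmas
-- L1
lemma aux_isUnit_one_sub {p : ℕ} [Fact p.Prime] {O : Type} [CommRing O] [IsDomain O]
    [Algebra ℤ_[p] O] {ζ : O} {m : ℕ} (hm : ¬ p ∣ m) (hm0 : m ≠ 0)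
    (hζ : ζ ^ m = 1) (hζ1 : ζ ≠ 1) : IsUnit (1 - ζ) := by
  have hS : (∑ k ∈ Finset.range m, ζ ^ k) = 0 := by
    have h := geom_sum_mul ζ m
    rw [hζ, sub_self] at h
    rcases mul_eq_zero.mp h with h | h
    · exact h
    · exact absurd (sub_eq_zero.mp h) hζ1
  have key : (1 - ζ) * (∑ k ∈ Finset.range m, ∑ j ∈ Finset.range k, ζ ^ j) = (m : O) := by
    rw [Finset.mul_sum]
    have e : ∀ k ∈ Finset.range m, (1 - ζ) * ∑ j ∈ Finset.range k, ζ ^ j = 1 - ζ ^ k := by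
      intro k _
      have h := geom_sum_mul ζ k
      linear_combination -h
    rw [Finset.sum_congr rfl e, Finset.sum_sub_distrib, hS, sub_zero, Finset.sum_const,
      Finset.card_range, nsmul_eq_mul, mul_one]
  have hmZ : IsUnit (m : ℤ_[p]) := by
    rw [PadicInt.isUnit_iff]
    have h2 : ¬ ‖((m : ℤ) : ℤ_[p])‖ < 1 := by
      rw [PadicInt.norm_int_lt_one_iff_dvd]
      exact_mod_cast hm
    have h1 : ‖((m : ℤ) : ℤ_[p])‖ ≤ 1 := PadicInt.norm_le_one _
    have : ((m : ℕ) : ℤ_[p]) = ((m : ℤ) : ℤ_[p]) := by push_cast; ring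
    rw [this]
    exact le_antisymm h1 (not_lt.mp h2)
  have hmO : IsUnit ((m : ℕ) : O) := by
    have := hmZ.map (algebraMap ℤ_[p] O)
    rwa [map_natCast] at this
  rw [← key] at hmO
  exact isUnit_of_mul_isUnit_left hmO

-- L2
lemma aux_pow_part {p : ℕ} [Fact p.Prime] {G : Type} [CommGroup G] [Fintype G] (g : G)
    (hg : ∀ k : ℕ, g ^ p ^ k ≠ 1) :
    ∃ e : ℕ, g ^ p ^ e ≠ 1 ∧ (orderOf (g ^ p ^ e)).Coprime p := by
  have hfin : orderOf g ≠ 0 := (orderOf_pos g).ne'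
  refine ⟨(orderOf g).factorization p, fun h => hg _ h, ?_⟩
  have ho : orderOf (g ^ p ^ (orderOf g).factorization p)
      = ordCompl[p] (orderOf g) := by
    exact orderOf_pow_of_dvd (pow_ne_zero _ (Fact.out : p.Prime).ne_zero)
      (Nat.ordProj_dvd _ _)
  rw [ho]
  exact (Nat.coprime_ordCompl (Fact.out : p.Prime) hfin).symm

-- aux_not_pgroup
lemma aux_not_pgroup {p : ℕ} {G : Type} [CommGroup G] {H : Subgroup G}
    (h : ¬ IsPGroup p ↥H) : ∃ δ ∈ H, ∀ k : ℕ, δ ^ p ^ k ≠ 1 := by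
  unfold IsPGroup at h
  push_neg at h
  obtain ⟨g, hg⟩ := h
  exact ⟨↑g, g.2, fun k hk => hg k (Subtype.ext (by simpa using hk))⟩

-- aux_pgroup
lemma aux_pgroup {p : ℕ} {G : Type} [CommGroup G] (I D : Subgroup G) (φt : G)
    (hφgen : ∀ d ∈ D, ∃ n : ℤ, φt ^ n * d⁻¹ ∈ I) (hI : IsPGroup p ↥I)
    {k : ℕ} (hφ : φt ^ p ^ k = 1) : IsPGroup p ↥D := by
  have hz : IsPGroup p ↥(Subgroup.zpowers φt) := by
    intro g
    refine ⟨k, ?_⟩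
    obtain ⟨n, hn⟩ := Subgroup.mem_zpowers_iff.mp g.2
    have h1 : (↑g : G) ^ p ^ k = 1 := by
      rw [← hn, ← zpow_natCast (φt ^ n), ← zpow_mul, mul_comm, zpow_mul, zpow_natCast, hφ,
        one_zpow]
    exact Subtype.ext (by simpa using h1)
  have hsup : IsPGroup p ↥(I ⊔ Subgroup.zpowers φt) := hI.to_sup_of_normal_right hz
  refine hsup.to_le ?_
  intro d hd
  obtain ⟨n, hn⟩ := hφgen d hd
  have hdd : d = (φt ^ n * d⁻¹)⁻¹ * φt ^ n := by group
  rw [hdd]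
  exact Subgroup.mul_mem _ (Subgroup.inv_mem _ (Subgroup.mem_sup_left hn))
    (Subgroup.mem_sup_right (Subgroup.mem_zpowers_iff.mpr ⟨n, rfl⟩))

lemma nuElt_mul_of {R : Type} [CommRing R] {G : Type} [CommGroup G] [Fintype G]
    {H : Subgroup G} {g : G} (hg : g ∈ H) :
    nuElt R H * MonoidAlgebra.of R G g = nuElt R H := by
  classical
  unfold nuElt
  rw [Finset.sum_mul]
  have e : ∀ σ0 ∈ Finset.univ.filter (· ∈ H),
      MonoidAlgebra.of R G σ0 * MonoidAlgebra.of R G g = MonoidAlgebra.of R G (σ0 * g) :=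
    fun _ _ => (map_mul (MonoidAlgebra.of R G) _ _).symm
  rw [Finset.sum_congr rfl e]
  apply Finset.sum_nbij' (i := fun σ0 => σ0 * g) (j := fun σ0 => σ0 * g⁻¹)
  · intro a ha
    simp only [Finset.mem_filter, Finset.mem_univ, true_and] at ha ⊢
    exact H.mul_mem ha hg
  · intro a ha
    simp only [Finset.mem_filter, Finset.mem_univ, true_and] at ha ⊢
    exact H.mul_mem ha (H.inv_mem hg)
  · intro a _; group
  · intro a _; group
  · intro a _; rfl

lemma nuElt_sq {R : Type} [CommRing R] {G : Type} [CommGroup G] [Fintype G]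
    (H : Subgroup G) :
    nuElt R H * nuElt R H = (Nat.card H : MonoidAlgebra R G) * nuElt R H := by
  classical
  have hcard : (Finset.univ.filter (· ∈ H)).card = Nat.card ↥H := by
    rw [Nat.card_eq_fintype_card, Fintype.card_subtype]
  nth_rewrite 2 [nuElt]
  rw [Finset.mul_sum]
  have e : ∀ σ0 ∈ Finset.univ.filter (· ∈ H),
      nuElt R H * MonoidAlgebra.of R G σ0 = nuElt R H := by
    intro σ0 hσ0
    simp only [Finset.mem_filter, Finset.mem_univ, true_and] at hσ0
    exact nuElt_mul_of hσ0
  rw [Finset.sum_congr rfl e, Finset.sum_const, hcard, nsmul_eq_mul]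

lemma nuElt_bot {R : Type} [CommRing R] {G : Type} [CommGroup G] [Fintype G] :
    nuElt R (⊥ : Subgroup G) = 1 := by
  classical
  unfold nuElt
  have : Finset.univ.filter (· ∈ (⊥ : Subgroup G)) = {1} := by
    ext x; simp [Subgroup.mem_bot]
  rw [this, Finset.sum_singleton, map_one]

lemma of_sub_one_mem_ker {R : Type} [CommRing R] {G : Type} [CommGroup G] [Fintype G]
    {D : Subgroup G} {u : G} (hu : u ∈ D) :
    MonoidAlgebra.of R G u - 1 ∈ kerIdealR R D := by
  rw [kerIdealR, RingHom.mem_ker, map_sub, map_one]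
  have h2 : (MonoidAlgebra.mapDomainRingHom R (QuotientGroup.mk' D)) (MonoidAlgebra.of R G u)
      = MonoidAlgebra.of R (G ⧸ D) ((QuotientGroup.mk' D) u) := by
    simp [MonoidAlgebra.of_apply]
  rw [h2, show (QuotientGroup.mk' D) u = 1 from (QuotientGroup.eq_one_iff u).mpr hu, map_one,
    sub_self]

lemma decomp_zero {G : Type} [CommGroup G] {I : Subgroup G} (σ : Fin 0 → G)
    (hdec : (∀ l, σ l ∈ I) ∧ ∀ g ∈ I, ∃! x : ∀ l, Subgroup.zpowers (σ l),
      (∏ l, ((x l : G))) = g) : I = ⊥ := by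
  refine le_antisymm ?_ bot_le
  intro g hg
  obtain ⟨x, hx1, _⟩ := hdec.2 g hg
  simp only [Finset.univ_eq_empty, Finset.prod_empty] at hx1
  simpa [Subgroup.mem_bot] using hx1.symm

set_option maxHeartbeats 1000000


/-- for `p` an odd prime, `G'` the maximal subgroup of `G` of order prime
to `p`, `χ` an injective (faithful) character of `G'` with values in (the units of) the
domain `O_χ = ℤ_p[χ(G')]`, and `ℤ_p[G]^χ = ℤ_p[G] ⊗_{ℤ_p[G']} O_χ` (with `x^χ = x ⊗ 1`),
if `D` is not a `p`-group then the ideal of `ℤ_p[G]^χ` generated by `(#I·ν_I)^χ`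
together with the elements `((#I − ν_I·φ̃⁻¹)·j)^χ`, `j ∈ 𝓙`, equals the principal ideal
generated by `(#I − ν_I·φ̃⁻¹)^χ`.  (This is `𝓐^χ = 𝓑^χ` with denominators cleared by
`#I`.) -/
theorem statement19 (p : ℕ) [Fact p.Prime] (hp2 : p ≠ 2)
    {G : Type} [CommGroup G] [Fintype G]
    (G' : Subgroup G) (hG' : ∀ g : G, g ∈ G' ↔ (orderOf g).Coprime p)
    (I D : Subgroup G) (hID : I ≤ D)
    (φt : G) (hφt : φt ∈ D) (hφgen : ∀ d ∈ D, ∃ n : ℤ, φt ^ n * d⁻¹ ∈ I)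
    {s : ℕ} (σ : Fin s → G) (hdec : IsDecomp I σ)
    (hDnotp : ¬ IsPGroup p ↥D)
    (O : Type) [CommRing O] [IsDomain O] [Algebra ℤ_[p] O]
    (χ : ↥G' →* Oˣ) (hχinj : Function.Injective χ)
    (hadj : Algebra.adjoin ℤ_[p] (Set.range fun g : ↥G' => ((χ g : Oˣ) : O)) = ⊤) :
    letI : Algebra (MonoidAlgebra ℤ_[p] ↥G') (MonoidAlgebra ℤ_[p] G) :=
      (MonoidAlgebra.mapDomainRingHom ℤ_[p] G'.subtype).toAlgebra
    letI : Algebra (MonoidAlgebra ℤ_[p] ↥G') O :=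
      ((MonoidAlgebra.lift ℤ_[p] O ↥G' ((Units.coeHom O).comp χ)).toRingHom).toAlgebra
    Ideal.span
        (({((Nat.card I : MonoidAlgebra ℤ_[p] G) * nuElt ℤ_[p] I)
            ⊗ₜ[MonoidAlgebra ℤ_[p] ↥G'] (1 : O)} :
          Set ((MonoidAlgebra ℤ_[p] G) ⊗[MonoidAlgebra ℤ_[p] ↥G'] O)) ∪
          {y | ∃ j ∈ (∑ i ∈ Finset.range s,
              ZidealR ℤ_[p] σ (i + 1) * (kerIdealR ℤ_[p] D) ^ i :
                Ideal (MonoidAlgebra ℤ_[p] G)),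
            y = (((Nat.card I : MonoidAlgebra ℤ_[p] G)
                - nuElt ℤ_[p] I * MonoidAlgebra.of ℤ_[p] G φt⁻¹) * j)
              ⊗ₜ[MonoidAlgebra ℤ_[p] ↥G'] (1 : O)})
      = Ideal.span {((Nat.card I : MonoidAlgebra ℤ_[p] G)
            - nuElt ℤ_[p] I * MonoidAlgebra.of ℤ_[p] G φt⁻¹)
          ⊗ₜ[MonoidAlgebra ℤ_[p] ↥G'] (1 : O)} := by
  letI : Algebra (MonoidAlgebra ℤ_[p] ↥G') (MonoidAlgebra ℤ_[p] G) :=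
    (MonoidAlgebra.mapDomainRingHom ℤ_[p] G'.subtype).toAlgebra
  letI : Algebra (MonoidAlgebra ℤ_[p] ↥G') O :=
    ((MonoidAlgebra.lift ℤ_[p] O ↥G' ((Units.coeHom O).comp χ)).toRingHom).toAlgebra
  -- abbreviations
  set R' := MonoidAlgebra ℤ_[p] ↥G' with hR'
  set A := MonoidAlgebra ℤ_[p] G with hA
  -- key fact: pulling a G'-element across the tensor
  have h1 : ∀ (x : A) (g : G) (hg : g ∈ G') (b : O),
      (x * MonoidAlgebra.of ℤ_[p] G g) ⊗ₜ[R'] b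
        = x ⊗ₜ[R'] (((χ ⟨g, hg⟩ : Oˣ) : O) * b) := by
    intro x g hg b
    have halg : MonoidAlgebra.of ℤ_[p] G g
        = algebraMap R' A (MonoidAlgebra.of ℤ_[p] ↥G' ⟨g, hg⟩) := by
      have e : (algebraMap R' A : R' →+* A)
          = MonoidAlgebra.mapDomainRingHom ℤ_[p] G'.subtype := rfl
      rw [show (algebraMap R' A) (MonoidAlgebra.of ℤ_[p] ↥G' ⟨g, hg⟩)
          = MonoidAlgebra.mapDomainRingHom ℤ_[p] G'.subtype
            (MonoidAlgebra.of ℤ_[p] ↥G' ⟨g, hg⟩) from congrFun (congrArg _ e) _]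
      simp only [MonoidAlgebra.of_apply, MonoidAlgebra.mapDomainRingHom_apply,
        AddMonoidHom.toFun_eq_coe, Finsupp.mapDomain.addMonoidHom_apply,
        Finsupp.mapDomain_single, Subgroup.coe_subtype, MonoidAlgebra.mapDomain_single]
    rw [halg, mul_comm, ← Algebra.smul_def, TensorProduct.smul_tmul, Algebra.smul_def]
    congr 1
    show (MonoidAlgebra.lift ℤ_[p] O ↥G' ((Units.coeHom O).comp χ))
      (MonoidAlgebra.of ℤ_[p] ↥G' ⟨g, hg⟩) * b = _
    rw [MonoidAlgebra.lift_of]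
    rfl
  haveI : Finite ↥G' := Subtype.finite
  -- units from the character
  have hchi_unit : ∀ x : ↥G', x ≠ 1 → IsUnit (1 - ((χ x : Oˣ) : O)) := by
    intro x hx
    have hm0 : orderOf x ≠ 0 := (orderOf_pos x).ne'
    have hcop : (orderOf x).Coprime p := by
      have h := (hG' ↑x).mp x.2
      rwa [Subgroup.orderOf_coe] at h
    have hdvd : ¬ p ∣ orderOf x := by
      intro hdvd
      exact (Fact.out : p.Prime).one_lt.ne' (Nat.Coprime.eq_one_of_dvd hcop.symm hdvd)
    have hζm : ((χ x : Oˣ) : O) ^ orderOf x = 1 := by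
      rw [← Units.val_pow_eq_pow_val, ← map_pow, pow_orderOf_eq_one, map_one, Units.val_one]
    have hζ1 : ((χ x : Oˣ) : O) ≠ 1 := by
      intro h
      exact hx (hχinj (Units.ext (by rw [h, map_one, Units.val_one])))
    exact aux_isUnit_one_sub hdvd hm0 hζm hζ1
  have hunit_tmul : ∀ c : Oˣ, IsUnit ((1 : A) ⊗ₜ[R'] (c : O)) := by
    intro c
    refine IsUnit.of_mul_eq_one ((1 : A) ⊗ₜ[R'] ((c⁻¹ : Oˣ) : O)) ?_
    rw [Algebra.TensorProduct.tmul_mul_tmul, one_mul, Units.mul_inv,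
      ← Algebra.TensorProduct.one_def]
  have hpowL : ∀ (x : A) (n : ℕ), (x ^ n) ⊗ₜ[R'] (1 : O) = (x ⊗ₜ[R'] (1 : O)) ^ n := by
    intro x n
    induction n with
    | zero => simp [Algebra.TensorProduct.one_def]
    | succ n ih =>
      rw [pow_succ, pow_succ, ← ih, Algebra.TensorProduct.tmul_mul_tmul, mul_one]
  -- notation
  set ν : A := nuElt ℤ_[p] I with hν
  set f : A := MonoidAlgebra.of ℤ_[p] G φt⁻¹ with hf
  set N : A := (Nat.card ↥I : A) with hN
  set θ : A := N - ν * f with hθ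
  -- the distinguished element of D of order prime to p
  obtain ⟨δ, hδD, hδ⟩ := aux_not_pgroup hDnotp
  apply le_antisymm
  · -- forward inclusion
    rw [Ideal.span_le]
    rintro z hz
    simp only [Set.mem_union, Set.mem_singleton_iff, Set.mem_setOf_eq] at hz
    rcases hz with rfl | ⟨j, hjmem, rfl⟩
    · -- (N ν)^χ ∈ (θ^χ)
      rw [SetLike.mem_coe, Ideal.mem_span_singleton]
      by_cases hI : IsPGroup p ↥I
      · -- I is a p-group: 1 - a is a unit
        have hφ : ∀ k : ℕ, φt ^ p ^ k ≠ 1 := by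
          intro k hk
          exact hDnotp (aux_pgroup I D φt hφgen hI hk)
        obtain ⟨e, hne1, hcop⟩ := aux_pow_part φt hφ
        have huG' : φt ^ p ^ e ∈ G' := (hG' _).mpr hcop
        have hx1 : (⟨φt ^ p ^ e, huG'⟩ : ↥G') ≠ 1 := fun h => hne1 (congrArg Subtype.val h)
        have hinvne : (⟨φt ^ p ^ e, huG'⟩ : ↥G')⁻¹ ≠ 1 := by
          simpa [inv_eq_one] using hx1
        obtain ⟨w1, hw1⟩ := hchi_unit _ hinvne
        set a : A ⊗[R'] O := f ⊗ₜ[R'] (1 : O) with ha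
        have hapow : a ^ p ^ e
            = (1 : A) ⊗ₜ[R'] ((χ ((⟨φt ^ p ^ e, huG'⟩ : ↥G')⁻¹) : Oˣ) : O) := by
          have h4 := h1 1 ((φt ^ p ^ e)⁻¹) (G'.inv_mem huG') 1
          rw [one_mul, mul_one] at h4
          rw [ha, ← hpowL, hf, ← map_pow, inv_pow, h4]
          rfl
        have hgeo : (1 - a) * (∑ k ∈ Finset.range (p ^ e), a ^ k) = 1 - a ^ p ^ e := by
          have h := geom_sum_mul a (p ^ e)
          linear_combination -h
        have hus : IsUnit (1 - a ^ p ^ e) := by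
          rw [hapow]
          have h5 : (1 : A ⊗[R'] O)
              - (1 : A) ⊗ₜ[R'] ((χ ((⟨φt ^ p ^ e, huG'⟩ : ↥G')⁻¹) : Oˣ) : O)
              = (1 : A) ⊗ₜ[R'] (1 - ((χ ((⟨φt ^ p ^ e, huG'⟩ : ↥G')⁻¹) : Oˣ) : O)) := by
            rw [TensorProduct.tmul_sub, ← Algebra.TensorProduct.one_def]
          rw [h5, ← hw1]
          exact hunit_tmul w1
        rw [← hgeo] at hus
        obtain ⟨w3, hw3⟩ := isUnit_of_mul_isUnit_left hus
        refine ⟨(ν ⊗ₜ[R'] (1 : O)) * ↑w3⁻¹, ?_⟩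
        have h2 : ν * ν = N * ν := by rw [hν, hN]; exact nuElt_sq I
        have eL : ((N * ν) ⊗ₜ[R'] (1 : O)) * (1 - a)
            = (N * ν - N * ν * f) ⊗ₜ[R'] (1 : O) := by
          rw [ha, mul_sub, mul_one, Algebra.TensorProduct.tmul_mul_tmul, mul_one,
            ← TensorProduct.sub_tmul]
        have eR : (θ ⊗ₜ[R'] (1 : O)) * (ν ⊗ₜ[R'] (1 : O)) = (θ * ν) ⊗ₜ[R'] (1 : O) := by
          rw [Algebra.TensorProduct.tmul_mul_tmul, mul_one]
        have hkey : ((N * ν) ⊗ₜ[R'] (1 : O)) * (1 - a)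
            = (θ ⊗ₜ[R'] (1 : O)) * (ν ⊗ₜ[R'] (1 : O)) := by
          rw [eL, eR]
          congr 1
          rw [hθ]
          linear_combination f * h2
        rw [← mul_assoc, ← hkey, ← hw3, mul_assoc, Units.mul_inv, mul_one]
      · -- I is not a p-group: ν^χ = 0
        obtain ⟨g0, hg0I, hg0⟩ := aux_not_pgroup hI
        obtain ⟨e, hne1, hcop⟩ := aux_pow_part g0 hg0
        have hu'I : g0 ^ p ^ e ∈ I := Subgroup.pow_mem I hg0I _
        have hu'G' : g0 ^ p ^ e ∈ G' := (hG' _).mpr hcop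
        have hx1 : (⟨g0 ^ p ^ e, hu'G'⟩ : ↥G') ≠ 1 := fun h => hne1 (congrArg Subtype.val h)
        obtain ⟨w0, hw0⟩ := hchi_unit _ hx1
        have e1 : ν ⊗ₜ[R'] (1 : O)
            = ν ⊗ₜ[R'] ((χ (⟨g0 ^ p ^ e, hu'G'⟩ : ↥G') : Oˣ) : O) := by
          conv_lhs => rw [hν, ← nuElt_mul_of hu'I]
          rw [h1 _ _ hu'G' 1, mul_one, hν]
        obtain ⟨W, hW⟩ := hunit_tmul w0
        have e2 : (ν ⊗ₜ[R'] (1 : O)) * (W : A ⊗[R'] O) = 0 := by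
          rw [hW, Algebra.TensorProduct.tmul_mul_tmul, mul_one, one_mul, hw0,
            TensorProduct.tmul_sub, ← e1, sub_self]
        have hν0 : ν ⊗ₜ[R'] (1 : O) = 0 := (Units.mul_left_eq_zero W).mp e2
        have hNν0 : (N * ν) ⊗ₜ[R'] (1 : O) = 0 := by
          have h3 : (N * ν) ⊗ₜ[R'] (1 : O) = (N ⊗ₜ[R'] (1 : O)) * (ν ⊗ₜ[R'] (1 : O)) := by
            rw [Algebra.TensorProduct.tmul_mul_tmul, mul_one]
          rw [h3, hν0, mul_zero]
        rw [hNν0]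
        exact dvd_zero _
    · -- (θ j)^χ ∈ (θ^χ)
      rw [SetLike.mem_coe, Ideal.mem_span_singleton]
      exact ⟨j ⊗ₜ[R'] (1 : O), by rw [Algebra.TensorProduct.tmul_mul_tmul, mul_one]⟩
  · -- backward inclusion
    rw [Ideal.span_le, Set.singleton_subset_iff, SetLike.mem_coe]
    obtain ⟨e, hne1, hcop⟩ := aux_pow_part δ hδ
    have huD : δ ^ p ^ e ∈ D := Subgroup.pow_mem D hδD _
    have huG' : δ ^ p ^ e ∈ G' := (hG' _).mpr hcop
    have hx1 : (⟨δ ^ p ^ e, huG'⟩ : ↥G') ≠ 1 := fun h => hne1 (congrArg Subtype.val h)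
    have hcu : IsUnit (((χ (⟨δ ^ p ^ e, huG'⟩ : ↥G') : Oˣ) : O) - 1) := by
      have h := (hchi_unit _ hx1).neg
      rwa [neg_sub] at h
    obtain ⟨w, hw⟩ := hcu
    by_cases hs0 : s = 0
    · subst hs0
      have hIbot : I = ⊥ := decomp_zero σ hdec
      have hgen : (N * ν) ⊗ₜ[R'] (1 : O) = 1 := by
        rw [hN, hν, hIbot, Subgroup.card_bot, nuElt_bot, Nat.cast_one, one_mul,
          Algebra.TensorProduct.one_def]
      have h6 : θ ⊗ₜ[R'] (1 : O) = ((N * ν) ⊗ₜ[R'] (1 : O)) * (θ ⊗ₜ[R'] (1 : O)) := by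
        rw [hgen, one_mul]
      rw [h6]
      exact Ideal.mul_mem_right _ _ (Ideal.subset_span (Set.mem_union_left _ rfl))
    · obtain ⟨s', rfl⟩ := Nat.exists_eq_succ_of_ne_zero hs0
      set u : A := MonoidAlgebra.of ℤ_[p] G (δ ^ p ^ e) - 1 with hu
      have hterm : u ^ s' ∈ ZidealR ℤ_[p] σ (s' + 1) * kerIdealR ℤ_[p] D ^ s' := by
        have h1Z : (1 : A) ∈ ZidealR ℤ_[p] σ (s' + 1) :=
          Ideal.subset_span ⟨∅, by simp, by simp⟩
        have hker : u ∈ kerIdealR ℤ_[p] D := of_sub_one_mem_ker huD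
        simpa using Ideal.mul_mem_mul h1Z (Ideal.pow_mem_pow hker s')
      have hsum : u ^ s' ∈ ∑ i ∈ Finset.range (s' + 1),
          ZidealR ℤ_[p] σ (i + 1) * kerIdealR ℤ_[p] D ^ i := by
        rw [Finset.sum_range_succ, Submodule.add_eq_sup]
        exact Submodule.mem_sup_right hterm
      have huw : u ⊗ₜ[R'] (1 : O) = (1 : A) ⊗ₜ[R'] ((w : O)) := by
        rw [hu, TensorProduct.sub_tmul]
        have h4 := h1 1 (δ ^ p ^ e) huG' 1
        rw [one_mul, mul_one] at h4
        rw [h4, hw, TensorProduct.tmul_sub]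
      have e5 : (θ * u ^ s') ⊗ₜ[R'] (1 : O)
          = (θ ⊗ₜ[R'] (1 : O)) * ((1 : A) ⊗ₜ[R'] ((w : O))) ^ s' := by
        rw [← huw, ← hpowL, Algebra.TensorProduct.tmul_mul_tmul, mul_one]
      have hww : ((1 : A) ⊗ₜ[R'] ((w : O))) * ((1 : A) ⊗ₜ[R'] ((↑(w⁻¹) : O))) = 1 := by
        rw [Algebra.TensorProduct.tmul_mul_tmul, one_mul, Units.mul_inv,
          ← Algebra.TensorProduct.one_def]
      have hfin : θ ⊗ₜ[R'] (1 : O)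
          = ((θ * u ^ s') ⊗ₜ[R'] (1 : O)) * (((1 : A) ⊗ₜ[R'] ((↑(w⁻¹) : O))) ^ s') := by
        rw [e5, mul_assoc, ← mul_pow, hww, one_pow, mul_one]
      rw [hfin]
      exact Ideal.mul_mem_right _ _
        (Ideal.subset_span (Set.mem_union_right _ ⟨u ^ s', hsum, rfl⟩))
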